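/- Let 0 ≤ κ ≤ 1, let q₀ : ℝ → ℝ be measurable with 0 ≤ q₀(z) ≤ Q for all z and some constant Q ≥ 0, let 0 < θ < 1/4, and let g₁, g₂ : ℝ³ → ℝ be measurable functions with |gᵢ(u)| ≤ Kᵢ e^{−θ|u|²} for all u (i = 1,2). Define, for v ∈ ℝ³, Γ_gain(g₁,g₂)(v) := ∫_{ℝ³} ∫_{S²} |v−u|^κ · q₀( ((v−u)/|v−u|)·ω ) · e^{−|u|²/4} · g₁(u + ((v−u)·ω)ω) · g₂(v − ((v−u)·ω)ω) dσ(ω) du, where σ is the surface measure on the unit sphere S² ⊂ ℝ³. Then there exists a constant C, depending only on κ, Q and θ, such that |Γ_gain(g₁,g₂)(v)| ≤ C K₁ K₂ (1+|v|)^κ e^{−θ|v|²} for every v ∈ ℝ³. -/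

import Mathlib

noncomputable section

open Real MeasureTheory

/-- Euclidean 3-space. -/
abbrev E3 : Type := EuclideanSpace ℝ (Fin 3)

lemma collision_identity (u v ω : E3) (hω : ‖ω‖ = 1) :
    ‖u + ((inner ℝ (v - u) ω : ℝ)) • ω‖ ^ 2 + ‖v - ((inner ℝ (v - u) ω : ℝ)) • ω‖ ^ 2
      = ‖u‖ ^ 2 + ‖v‖ ^ 2 := by
  set t : ℝ := inner ℝ (v - u) ω with ht
  have h1 : ‖u + t • ω‖ ^ 2 = ‖u‖ ^ 2 + 2 * (inner ℝ u (t • ω) : ℝ) + ‖t • ω‖ ^ 2 :=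
    norm_add_sq_real u (t • ω)
  have h2 : ‖v - t • ω‖ ^ 2 = ‖v‖ ^ 2 - 2 * (inner ℝ v (t • ω) : ℝ) + ‖t • ω‖ ^ 2 :=
    norm_sub_sq_real v (t • ω)
  have h3 : (inner ℝ u (t • ω) : ℝ) = t * inner ℝ u ω := real_inner_smul_right u ω t
  have h4 : (inner ℝ v (t • ω) : ℝ) = t * inner ℝ v ω := real_inner_smul_right v ω t
  have h5 : ‖t • ω‖ ^ 2 = t ^ 2 := by
    rw [norm_smul, hω, mul_one, Real.norm_eq_abs, sq_abs]
  have h6 : t = (inner ℝ v ω : ℝ) - inner ℝ u ω := by rw [ht, inner_sub_left]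
  rw [h1, h2, h3, h4, h5, h6]; ring

lemma gauss_integrable : Integrable (fun v : E3 => Real.exp (-(1/8 : ℝ) * ‖v‖ ^ 2)) := by
  have h := (GaussianFourier.integrable_cexp_neg_mul_sq_norm_add (V := E3)
    (b := (1/8 : ℂ)) (by norm_num) 0 0).norm
  convert h using 2 with v
  simp [Complex.norm_exp, ← Complex.ofReal_pow]

lemma majorant_integrable :
    Integrable (fun u : E3 => (1 + ‖u‖) * Real.exp (-‖u‖ ^ 2 / 4)) := by
  apply Integrable.mono' (gauss_integrable.const_mul 3)
  · exact (Continuous.aestronglyMeasurable (by continuity))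
  · filter_upwards with u
    rw [Real.norm_eq_abs, abs_of_nonneg (by positivity)]
    set t := ‖u‖
    have ht : (0:ℝ) ≤ t := norm_nonneg u
    have h1 : (1 + t) ≤ 3 * Real.exp (t ^ 2 / 8) := by
      have := Real.add_one_le_exp (t ^ 2 / 8)
      nlinarith [sq_nonneg (t - 4/3), Real.exp_pos (t^2/8)]
    have h2 : (1 + t) * Real.exp (-t ^ 2 / 8) ≤ 3 := by
      calc (1 + t) * Real.exp (-t ^ 2 / 8)
          ≤ (3 * Real.exp (t ^ 2 / 8)) * Real.exp (-t ^ 2 / 8) :=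
            mul_le_mul_of_nonneg_right h1 (Real.exp_pos _).le
        _ = 3 := by
            rw [mul_assoc, ← Real.exp_add, show t ^ 2 / 8 + -t ^ 2 / 8 = 0 by ring,
              Real.exp_zero, mul_one]
    have h3 : Real.exp (-t ^ 2 / 4) = Real.exp (-t ^ 2 / 8) * Real.exp (-(1/8:ℝ) * t ^ 2) := by
      rw [← Real.exp_add]; ring_nf
    calc (1 + t) * Real.exp (-t ^ 2 / 4)
        = ((1 + t) * Real.exp (-t ^ 2 / 8)) * Real.exp (-(1/8:ℝ) * t ^ 2) := by rw [h3]; ring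
      _ ≤ 3 * Real.exp (-(1/8:ℝ) * t ^ 2) :=
          mul_le_mul_of_nonneg_right h2 (Real.exp_pos _).le

lemma integrand_pointwise_bound
    (κ Q θ : ℝ) (hκ₀ : 0 ≤ κ) (hκ₁ : κ ≤ 1) (hθ₀ : 0 < θ)
    (q₀ : ℝ → ℝ) (hq0 : ∀ z, 0 ≤ q₀ z) (hqQ : ∀ z, q₀ z ≤ Q)
    (g₁ g₂ : E3 → ℝ) (K₁ K₂ : ℝ)
    (hg₁ : ∀ u : E3, |g₁ u| ≤ K₁ * Real.exp (-θ * ‖u‖ ^ 2))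
    (hg₂ : ∀ u : E3, |g₂ u| ≤ K₂ * Real.exp (-θ * ‖u‖ ^ 2))
    (hK₁0 : 0 ≤ K₁) (hK₂0 : 0 ≤ K₂)
    (v u ω : E3) (hω : ‖ω‖ = 1) :
    |‖v - u‖ ^ κ * q₀ (inner ℝ (‖v - u‖⁻¹ • (v - u)) ω : ℝ) *
        Real.exp (-‖u‖ ^ 2 / 4) *
        g₁ (u + ((inner ℝ (v - u) ω : ℝ)) • ω) *
        g₂ (v - ((inner ℝ (v - u) ω : ℝ)) • ω)|
      ≤ (Q * K₁ * K₂ * (1 + ‖v‖) ^ κ * Real.exp (-θ * ‖v‖ ^ 2)) *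
          ((1 + ‖u‖) * Real.exp (-‖u‖ ^ 2 / 4)) := by
  set u' : E3 := u + ((inner ℝ (v - u) ω : ℝ)) • ω with hu'
  set v' : E3 := v - ((inner ℝ (v - u) ω : ℝ)) • ω with hv'
  have hQ' : (0:ℝ) ≤ Q := le_trans (hq0 0) (hqQ 0)
  have ha0 : (0:ℝ) ≤ ‖v - u‖ ^ κ := Real.rpow_nonneg (norm_nonneg _) κ
  have hb0 : (0:ℝ) ≤ q₀ (inner ℝ (‖v - u‖⁻¹ • (v - u)) ω : ℝ) := hq0 _
  have hc0 : (0:ℝ) ≤ Real.exp (-‖u‖ ^ 2 / 4) := (Real.exp_pos _).le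
  have ha : ‖v - u‖ ^ κ ≤ (1 + ‖v‖) ^ κ * (1 + ‖u‖) := by
    have hvu : ‖v - u‖ ≤ (1 + ‖v‖) * (1 + ‖u‖) := by
      have h := norm_sub_le v u
      nlinarith [norm_nonneg v, norm_nonneg u]
    calc ‖v - u‖ ^ κ ≤ ((1 + ‖v‖) * (1 + ‖u‖)) ^ κ :=
          Real.rpow_le_rpow (norm_nonneg _) hvu hκ₀
      _ = (1 + ‖v‖) ^ κ * (1 + ‖u‖) ^ κ :=
          Real.mul_rpow (by positivity) (by positivity)
      _ ≤ (1 + ‖v‖) ^ κ * (1 + ‖u‖) := by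
          apply mul_le_mul_of_nonneg_left _ (Real.rpow_nonneg (by positivity) κ)
          calc (1 + ‖u‖) ^ κ ≤ (1 + ‖u‖) ^ (1:ℝ) :=
                Real.rpow_le_rpow_of_exponent_le (by linarith [norm_nonneg u]) hκ₁
            _ = 1 + ‖u‖ := Real.rpow_one _
  have habs : |‖v - u‖ ^ κ * q₀ (inner ℝ (‖v - u‖⁻¹ • (v - u)) ω : ℝ) *
      Real.exp (-‖u‖ ^ 2 / 4) * g₁ u' * g₂ v'|
      = ‖v - u‖ ^ κ * q₀ (inner ℝ (‖v - u‖⁻¹ • (v - u)) ω : ℝ) *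
        Real.exp (-‖u‖ ^ 2 / 4) * |g₁ u'| * |g₂ v'| := by
    rw [abs_mul, abs_mul, abs_mul, abs_mul, abs_of_nonneg ha0, abs_of_nonneg hb0,
      abs_of_nonneg hc0]
  rw [habs]
  have hexp : Real.exp (-θ * ‖u'‖ ^ 2) * Real.exp (-θ * ‖v'‖ ^ 2)
      = Real.exp (-θ * ‖u‖ ^ 2) * Real.exp (-θ * ‖v‖ ^ 2) := by
    rw [← Real.exp_add, ← Real.exp_add]
    congr 1
    linear_combination (-θ) * collision_identity u v ω hω
  calc ‖v - u‖ ^ κ * q₀ (inner ℝ (‖v - u‖⁻¹ • (v - u)) ω : ℝ) *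
        Real.exp (-‖u‖ ^ 2 / 4) * |g₁ u'| * |g₂ v'|
      ≤ ((1 + ‖v‖) ^ κ * (1 + ‖u‖)) * Q * Real.exp (-‖u‖ ^ 2 / 4) *
          (K₁ * Real.exp (-θ * ‖u'‖ ^ 2)) * (K₂ * Real.exp (-θ * ‖v'‖ ^ 2)) := by
        have h1 := hg₁ u'
        have h2 := hg₂ v'
        have hb := hqQ (inner ℝ (‖v - u‖⁻¹ • (v - u)) ω : ℝ)
        gcongr <;> positivity
    _ = ((1 + ‖v‖) ^ κ * (1 + ‖u‖)) * Q * Real.exp (-‖u‖ ^ 2 / 4) * K₁ * K₂ *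
          (Real.exp (-θ * ‖u'‖ ^ 2) * Real.exp (-θ * ‖v'‖ ^ 2)) := by ring
    _ = ((1 + ‖v‖) ^ κ * (1 + ‖u‖)) * Q * Real.exp (-‖u‖ ^ 2 / 4) * K₁ * K₂ *
          (Real.exp (-θ * ‖u‖ ^ 2) * Real.exp (-θ * ‖v‖ ^ 2)) := by rw [hexp]
    _ ≤ ((1 + ‖v‖) ^ κ * (1 + ‖u‖)) * Q * Real.exp (-‖u‖ ^ 2 / 4) * K₁ * K₂ *
          (1 * Real.exp (-θ * ‖v‖ ^ 2)) := by
        apply mul_le_mul_of_nonneg_left _ (by positivity)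
        apply mul_le_mul_of_nonneg_right _ (Real.exp_pos _).le
        rw [Real.exp_le_one_iff]
        nlinarith [sq_nonneg ‖u‖]
    _ = (Q * K₁ * K₂ * (1 + ‖v‖) ^ κ * Real.exp (-θ * ‖v‖ ^ 2)) *
          ((1 + ‖u‖) * Real.exp (-‖u‖ ^ 2 / 4)) := by ring

/-- Pointwise Gaussian-decay bound for the gain term `Γ_gain` of the nonlinear
Boltzmann collision operator with hard-potential cutoff kernel (Lemma 2.3(i)).
The inner ℝ integral is over the unit sphere `S² ⊂ ℝ³` with its surface measure. -/
theorem gammaGain_pointwise_gaussian_bound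
    (κ Q θ : ℝ) (hκ₀ : 0 ≤ κ) (hκ₁ : κ ≤ 1) (hQ : 0 ≤ Q)
    (hθ₀ : 0 < θ) (hθ₁ : θ < 1 / 4) :
    ∃ C : ℝ, ∀ q₀ : ℝ → ℝ, Measurable q₀ →
      (∀ z : ℝ, 0 ≤ q₀ z) → (∀ z : ℝ, q₀ z ≤ Q) →
      ∀ g₁ g₂ : E3 → ℝ, Measurable g₁ → Measurable g₂ →
      ∀ K₁ K₂ : ℝ,
        (∀ u : E3, |g₁ u| ≤ K₁ * Real.exp (-θ * ‖u‖ ^ 2)) →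
        (∀ u : E3, |g₂ u| ≤ K₂ * Real.exp (-θ * ‖u‖ ^ 2)) →
        ∀ v : E3,
          |∫ u : E3, ∫ ω : Metric.sphere (0 : E3) 1,
              ‖v - u‖ ^ κ * q₀ (inner ℝ (‖v - u‖⁻¹ • (v - u)) (ω : E3) : ℝ) *
                Real.exp (-‖u‖ ^ 2 / 4) *
                g₁ (u + ((inner ℝ (v - u) (ω : E3) : ℝ)) • (ω : E3)) *
                g₂ (v - ((inner ℝ (v - u) (ω : E3) : ℝ)) • (ω : E3))
              ∂((volume : Measure E3).toSphere)|
            ≤ C * K₁ * K₂ * (1 + ‖v‖) ^ κ * Real.exp (-θ * ‖v‖ ^ 2) := by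
  set σ : Measure (Metric.sphere (0 : E3) 1) := (volume : Measure E3).toSphere with hσ
  set S : ℝ := (σ Set.univ).toReal with hS
  have hS0 : 0 ≤ S := ENNReal.toReal_nonneg
  set I : ℝ := ∫ u : E3, (1 + ‖u‖) * Real.exp (-‖u‖ ^ 2 / 4) with hI
  have hI0 : 0 ≤ I := integral_nonneg fun u => by positivity
  refine ⟨S * Q * I, ?_⟩
  intro q₀ hq₀m hq0 hqQ g₁ g₂ hg₁m hg₂m K₁ K₂ hg₁ hg₂ v
  have hK₁0 : 0 ≤ K₁ := by
    by_contra hc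
    push_neg at hc
    exact absurd ((abs_nonneg _).trans (hg₁ 0))
      (not_le.mpr (mul_neg_of_neg_of_pos hc (Real.exp_pos _)))
  have hK₂0 : 0 ≤ K₂ := by
    by_contra hc
    push_neg at hc
    exact absurd ((abs_nonneg _).trans (hg₂ 0))
      (not_le.mpr (mul_neg_of_neg_of_pos hc (Real.exp_pos _)))
  set c : ℝ := Q * K₁ * K₂ * (1 + ‖v‖) ^ κ * Real.exp (-θ * ‖v‖ ^ 2) with hc
  have hc0 : 0 ≤ c := by positivity
  -- pointwise bound on the inner ℝ integral
  have hinner : ∀ u : E3,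
      |∫ ω : Metric.sphere (0 : E3) 1,
          ‖v - u‖ ^ κ * q₀ (inner ℝ (‖v - u‖⁻¹ • (v - u)) (ω : E3) : ℝ) *
            Real.exp (-‖u‖ ^ 2 / 4) *
            g₁ (u + ((inner ℝ (v - u) (ω : E3) : ℝ)) • (ω : E3)) *
            g₂ (v - ((inner ℝ (v - u) (ω : E3) : ℝ)) • (ω : E3)) ∂σ|
        ≤ S * (c * ((1 + ‖u‖) * Real.exp (-‖u‖ ^ 2 / 4))) := by
    intro u
    have h1 : |∫ ω : Metric.sphere (0 : E3) 1,
          ‖v - u‖ ^ κ * q₀ (inner ℝ (‖v - u‖⁻¹ • (v - u)) (ω : E3) : ℝ) *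
            Real.exp (-‖u‖ ^ 2 / 4) *
            g₁ (u + ((inner ℝ (v - u) (ω : E3) : ℝ)) • (ω : E3)) *
            g₂ (v - ((inner ℝ (v - u) (ω : E3) : ℝ)) • (ω : E3)) ∂σ|
        ≤ ∫ ω : Metric.sphere (0 : E3) 1,
            |‖v - u‖ ^ κ * q₀ (inner ℝ (‖v - u‖⁻¹ • (v - u)) (ω : E3) : ℝ) *
              Real.exp (-‖u‖ ^ 2 / 4) *
              g₁ (u + ((inner ℝ (v - u) (ω : E3) : ℝ)) • (ω : E3)) *
              g₂ (v - ((inner ℝ (v - u) (ω : E3) : ℝ)) • (ω : E3))| ∂σ := by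
      simpa only [Real.norm_eq_abs] using norm_integral_le_integral_norm (μ := σ)
        (fun ω : Metric.sphere (0 : E3) 1 =>
          ‖v - u‖ ^ κ * q₀ (inner ℝ (‖v - u‖⁻¹ • (v - u)) (ω : E3) : ℝ) *
            Real.exp (-‖u‖ ^ 2 / 4) *
            g₁ (u + ((inner ℝ (v - u) (ω : E3) : ℝ)) • (ω : E3)) *
            g₂ (v - ((inner ℝ (v - u) (ω : E3) : ℝ)) • (ω : E3)))
    have h2 : (∫ ω : Metric.sphere (0 : E3) 1,
            |‖v - u‖ ^ κ * q₀ (inner ℝ (‖v - u‖⁻¹ • (v - u)) (ω : E3) : ℝ) *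
              Real.exp (-‖u‖ ^ 2 / 4) *
              g₁ (u + ((inner ℝ (v - u) (ω : E3) : ℝ)) • (ω : E3)) *
              g₂ (v - ((inner ℝ (v - u) (ω : E3) : ℝ)) • (ω : E3))| ∂σ)
        ≤ ∫ _ω : Metric.sphere (0 : E3) 1,
            c * ((1 + ‖u‖) * Real.exp (-‖u‖ ^ 2 / 4)) ∂σ := by
      apply integral_mono_of_nonneg
      · filter_upwards with ω using abs_nonneg _
      · exact integrable_const _
      · filter_upwards with ω
        exact integrand_pointwise_bound κ Q θ hκ₀ hκ₁ hθ₀ q₀ hq0 hqQ g₁ g₂ K₁ K₂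
          hg₁ hg₂ hK₁0 hK₂0 v u (ω : E3) (norm_eq_of_mem_sphere ω)
    have h3 : (∫ _ω : Metric.sphere (0 : E3) 1,
          c * ((1 + ‖u‖) * Real.exp (-‖u‖ ^ 2 / 4)) ∂σ)
        = S * (c * ((1 + ‖u‖) * Real.exp (-‖u‖ ^ 2 / 4))) := by
      rw [integral_const, hS, smul_eq_mul, Measure.real]
    linarith [h1.trans (h2.trans_eq h3)]
  -- outer integral
  have hmaj : Integrable (fun u : E3 =>
      S * (c * ((1 + ‖u‖) * Real.exp (-‖u‖ ^ 2 / 4)))) := by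
    simpa [mul_assoc] using majorant_integrable.const_mul (S * c)
  have houter : |∫ u : E3, ∫ ω : Metric.sphere (0 : E3) 1,
        ‖v - u‖ ^ κ * q₀ (inner ℝ (‖v - u‖⁻¹ • (v - u)) (ω : E3) : ℝ) *
          Real.exp (-‖u‖ ^ 2 / 4) *
          g₁ (u + ((inner ℝ (v - u) (ω : E3) : ℝ)) • (ω : E3)) *
          g₂ (v - ((inner ℝ (v - u) (ω : E3) : ℝ)) • (ω : E3)) ∂σ|
      ≤ ∫ u : E3, S * (c * ((1 + ‖u‖) * Real.exp (-‖u‖ ^ 2 / 4))) := by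
    calc |∫ u : E3, ∫ ω : Metric.sphere (0 : E3) 1,
          ‖v - u‖ ^ κ * q₀ (inner ℝ (‖v - u‖⁻¹ • (v - u)) (ω : E3) : ℝ) *
            Real.exp (-‖u‖ ^ 2 / 4) *
            g₁ (u + ((inner ℝ (v - u) (ω : E3) : ℝ)) • (ω : E3)) *
            g₂ (v - ((inner ℝ (v - u) (ω : E3) : ℝ)) • (ω : E3)) ∂σ|
        ≤ ∫ u : E3, |∫ ω : Metric.sphere (0 : E3) 1,
            ‖v - u‖ ^ κ * q₀ (inner ℝ (‖v - u‖⁻¹ • (v - u)) (ω : E3) : ℝ) *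
              Real.exp (-‖u‖ ^ 2 / 4) *
              g₁ (u + ((inner ℝ (v - u) (ω : E3) : ℝ)) • (ω : E3)) *
              g₂ (v - ((inner ℝ (v - u) (ω : E3) : ℝ)) • (ω : E3)) ∂σ| := by
          simpa only [Real.norm_eq_abs] using norm_integral_le_integral_norm (μ := (volume : Measure E3))
            (fun u : E3 => ∫ ω : Metric.sphere (0 : E3) 1,
              ‖v - u‖ ^ κ * q₀ (inner ℝ (‖v - u‖⁻¹ • (v - u)) (ω : E3) : ℝ) *
                Real.exp (-‖u‖ ^ 2 / 4) *
                g₁ (u + ((inner ℝ (v - u) (ω : E3) : ℝ)) • (ω : E3)) *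
                g₂ (v - ((inner ℝ (v - u) (ω : E3) : ℝ)) • (ω : E3)) ∂σ)
      _ ≤ ∫ u : E3, S * (c * ((1 + ‖u‖) * Real.exp (-‖u‖ ^ 2 / 4))) := by
          apply integral_mono_of_nonneg
          · filter_upwards with u using abs_nonneg _
          · exact hmaj
          · filter_upwards with u using hinner u
  have hval : (∫ u : E3, S * (c * ((1 + ‖u‖) * Real.exp (-‖u‖ ^ 2 / 4))))
      = (S * Q * I) * K₁ * K₂ * (1 + ‖v‖) ^ κ * Real.exp (-θ * ‖v‖ ^ 2) := by
    have : (∫ u : E3, S * (c * ((1 + ‖u‖) * Real.exp (-‖u‖ ^ 2 / 4))))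
        = (S * c) * I := by
      rw [hI, ← integral_const_mul]
      congr 1 with u
      ring
    rw [this, hc]; ring
  rw [hval] at houter
  exact houter
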